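/- For odd n > 5, the set of synchronizing words of the automaton K_n has maximal state complexity: sc(Syn(K_n)) = 2^n - n. -/

import Mathlib

open Finset

universe u v

variable {Q : Type u} {A : Type v}

/-- Extended transition function on words (lists of letters). -/
def dw (δ : Q → A → Q) (q : Q) (w : List A) : Q := w.foldl δ q

/-- A subset `S` of the state set is reachable if it is the image of the
full state set under some word. -/
def reach [Fintype Q] [DecidableEq Q] (δ : Q → A → Q) (S : Finset Q) : Prop :=
  ∃ w : List A, Finset.univ.image (fun q => dw δ q w) = S

/-- Rank of a word: cardinality of the image of the state set under it. -/
def rkw [Fintype Q] [DecidableEq Q] (δ : Q → A → Q) (w : List A) : ℕ :=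
  (Finset.univ.image (fun q => dw δ q w)).card

/-- Rank of a letter. -/
def rkl [Fintype Q] [DecidableEq Q] (δ : Q → A → Q) (a : A) : ℕ :=
  (Finset.univ.image (fun q => δ q a)).card

/-- A map is a cyclic permutation with a single orbit. -/
def isCyclicPerm (f : Q → Q) : Prop :=
  Function.Bijective f ∧ ∀ p q : Q, ∃ k : ℕ, f^[k] p = q

/-- Two subsets of states are distinguishable in the power automaton:
some word maps exactly one of them to a singleton. -/
def distinguishable [DecidableEq Q] (δ : Q → A → Q) (S T : Finset Q) : Prop :=
  ∃ u : List A,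
    Xor' ((S.image (fun q => dw δ q u)).card = 1)
         ((T.image (fun q => dw δ q u)).card = 1)

/-- The set of synchronizing words. -/
def Syn [Fintype Q] [DecidableEq Q] (δ : Q → A → Q) : Set (List A) :=
  {w | (Finset.univ.image (fun q => dw δ q w)).card = 1}

/-- The Nerode right-congruence of a language. -/
def nerode (L : Set (List A)) : Setoid (List A) where
  r u v := ∀ x : List A, u ++ x ∈ L ↔ v ++ x ∈ L
  iseqv := ⟨fun _ _ => Iff.rfl, fun h x => (h x).symm, fun h1 h2 x => (h1 x).trans (h2 x)⟩

/-- State complexity of a language: number of Nerode classes. -/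
noncomputable def sc (L : Set (List A)) : ℕ := Nat.card (Quotient (nerode L))

/-- Complete reachability. -/
def complReach [Fintype Q] [DecidableEq Q] (δ : Q → A → Q) : Prop :=
  ∀ S : Finset Q, S.Nonempty → ∃ w : List A, Finset.univ.image (fun q => dw δ q w) = S

/-- The permutation group generated by the permutational letters. -/
def permGroup [Fintype Q] [DecidableEq Q] (δ : Q → A → Q) : Subgroup (Equiv.Perm Q) :=
  Subgroup.closure {π : Equiv.Perm Q | ∃ a : A, ∀ q : Q, π q = δ q a}

/-- The transition function of the automaton `K_n`; the letter `true` is `b`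
(the cyclic permutation) and `false` is `a`. -/
def Kdelta (n : ℕ) [NeZero n] (i : Fin n) (c : Bool) : Fin n :=
  if c then i + 1
  else if i.val = 0 then ⟨3 % n, Nat.mod_lt 3 (NeZero.pos n)⟩
  else if i.val = n - 1 then ⟨0, NeZero.pos n⟩
  else if i.val = n - 2 then ⟨1 % n, Nat.mod_lt 1 (NeZero.pos n)⟩
  else i + 1

section KnAux

variable {n : ℕ} [NeZero n]

lemma kd_false_val (hn : 5 < n) (i : Fin n) : (Kdelta n i false).val =
    if i.val = 0 then 3 else if i.val = n-1 then 0 else if i.val = n-2 then 1 else i.val + 1 := by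
  have e1 : (1:ℕ) % n = 1 := Nat.mod_eq_of_lt (by omega)
  have e3 : (3:ℕ) % n = 3 := Nat.mod_eq_of_lt (by omega)
  have h1 : ((1:Fin n)).val = 1 % n := rfl
  have hlt := i.isLt
  simp only [Kdelta, Bool.false_eq_true, if_false]
  split_ifs with h1' h2 h3
  · exact e3
  · rfl
  · exact e1
  · rw [Fin.val_add, h1, e1, Nat.mod_eq_of_lt (by omega)]

lemma kd_true_val (hn : 5 < n) (i : Fin n) : (Kdelta n i true).val = (i.val + 1) % n := by
  have e1 : (1:ℕ) % n = 1 := Nat.mod_eq_of_lt (by omega)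
  have h1 : ((1:Fin n)).val = 1 % n := rfl
  simp only [Kdelta, if_true, Fin.val_add, h1, e1]

lemma dw_append {Q : Type u} {A : Type v} (δ : Q → A → Q) (q : Q) (u v : List A) :
    dw δ q (u ++ v) = dw δ (dw δ q u) v := List.foldl_append ..

lemma dw_nil {Q : Type u} {A : Type v} (δ : Q → A → Q) (q : Q) : dw δ q [] = q := rfl

lemma dw_cons {Q : Type u} {A : Type v} (δ : Q → A → Q) (q : Q) (a : A) (w : List A) :
    dw δ q (a :: w) = dw δ (δ q a) w := rfl

lemma dw_rep_true (hn : 5 < n) (q : Fin n) (k : ℕ) :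
    (dw (Kdelta n) q (List.replicate k true)).val = (q.val + k) % n := by
  induction k generalizing q with
  | zero => simp [dw_nil, Nat.mod_eq_of_lt q.isLt]
  | succ k ih =>
    rw [List.replicate_succ, dw_cons, ih, kd_true_val hn, Nat.mod_add_mod]
    congr 1; omega

/-- helper: mod for values below 2n -/
lemma modtwo (hn : 5 < n) {a : ℕ} (h : a < 2*n) : a % n = if a < n then a else a - n := by
  split_ifs with h'
  · exact Nat.mod_eq_of_lt h'
  · rw [Nat.mod_eq_sub_mod (by omega), Nat.mod_eq_of_lt (by omega)]

def relv (n : ℕ) (a b : Fin n) : ℕ := (a.val + n - b.val) % n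

lemma relv_lt (hn : 5 < n) (a b : Fin n) : relv n a b < n := Nat.mod_lt _ (by omega)

lemma relv_self (hn : 5 < n) (a : Fin n) : relv n a a = 0 := by
  unfold relv
  have := a.isLt
  rw [modtwo hn (by omega)]
  split_ifs with h <;> omega

lemma relv_pos (hn : 5 < n) {a b : Fin n} (h : a ≠ b) : 1 ≤ relv n a b := by
  rcases Nat.eq_zero_or_pos (relv n a b) with h0 | h1
  · exfalso
    apply h
    unfold relv at h0
    rw [modtwo hn (by omega : a.val + n - b.val < 2*n)] at h0
    have ha := a.isLt; have hb := b.isLt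
    apply Fin.ext
    split_ifs at h0 <;> omega
  · exact h1

lemma relv_eq_iff (hn : 5 < n) (a b : Fin n) (r : ℕ) (hr : r < n) :
    relv n a b = r ↔ a.val = (b.val + r) % n := by
  unfold relv
  have ha := a.isLt; have hb := b.isLt
  rw [modtwo hn (by omega), modtwo hn (by omega)]
  split_ifs <;> omega

def stepv (n : ℕ) (pv : ℕ) : List Bool := List.replicate (2*n - 2 - pv) true ++ [false]

def Af (n : ℕ) (x : ℕ) : ℕ :=
  if x = 0 then 3 else if x = n-1 then 0 else if x = n-2 then 1 else x + 1

lemma dw_stepv (hn : 5 < n) (p q : Fin n) :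
    (dw (Kdelta n) q (stepv n p.val)).val = Af n ((q.val + (2*n - 2 - p.val)) % n) := by
  unfold stepv
  rw [dw_append]
  have h1 : dw (Kdelta n) q (List.replicate (2*n-2-p.val) true) =
      ⟨(q.val + (2*n - 2 - p.val)) % n, Nat.mod_lt _ (by omega)⟩ :=
    Fin.ext (dw_rep_true hn q _)
  rw [h1]
  exact kd_false_val hn _

lemma step_center (hn : 5 < n) (p : Fin n) :
    dw (Kdelta n) p (stepv n p.val) = ⟨1, by omega⟩ := by
  apply Fin.ext
  rw [dw_stepv hn p p]
  have hp := p.isLt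
  have h2 : (p.val + (2*n - 2 - p.val)) % n = n - 2 := by
    rw [modtwo hn (by omega)]; split_ifs <;> omega
  rw [h2]
  show Af n (n-2) = 1
  unfold Af
  split_ifs <;> omega

def gN (n : ℕ) (r : ℕ) : ℕ := if r = 2 then 2 else if r = 1 then n-1 else r - 2

lemma gN_range (hn : 5 < n) {r : ℕ} (h1 : 1 ≤ r) (h2 : r ≤ n-1) :
    1 ≤ gN n r ∧ gN n r ≤ n-1 := by
  unfold gN; split_ifs <;> omega

lemma step_rel (hn : 5 < n) (p q : Fin n) (hne : q ≠ p) :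
    relv n (dw (Kdelta n) q (stepv n p.val)) ⟨1, by omega⟩ = gN n (relv n q p) := by
  have hp := p.isLt; have hq := q.isLt
  have hr1 : 1 ≤ relv n q p := relv_pos hn hne
  have hr2 : relv n q p < n := relv_lt hn q p
  set r := relv n q p with hrdef
  have hx : (q.val + (2*n - 2 - p.val)) % n = if r < 2 then r + n - 2 else r - 2 := by
    have he : q.val + (2*n - 2 - p.val) = (q.val + n - p.val) + (n - 2) := by omega
    rw [he, ← Nat.mod_add_mod]
    have : (q.val + n - p.val) % n = r := rfl
    rw [this, modtwo hn (by omega)]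
    split_ifs <;> omega
  unfold relv
  rw [dw_stepv hn p q, hx]
  have hv1 : ((⟨1, by omega⟩ : Fin n)).val = 1 := rfl
  rw [hv1]
  by_cases h2 : r = 2
  · rw [h2]
    norm_num
    have : Af n 0 = 3 := by unfold Af; split_ifs <;> omega
    rw [this]
    unfold gN
    rw [modtwo hn (by omega)]
    split_ifs <;> omega
  · by_cases h1 : r = 1
    · rw [h1]
      norm_num
      have : Af n (1 + n - 2) = 0 := by unfold Af; split_ifs <;> omega
      rw [this]
      unfold gN
      rw [modtwo hn (by omega)]
      split_ifs <;> omega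
    · rw [if_neg (by omega)]
      have : Af n (r - 2) = r - 1 := by unfold Af; split_ifs <;> omega
      rw [this]
      unfold gN
      rw [if_neg h2, if_neg h1, modtwo hn (by omega)]
      split_ifs <;> omega

def gNit (n : ℕ) : ℕ → ℕ → ℕ
  | 0, r => r
  | m+1, r => gNit n m (gN n r)

lemma gNit_two (hn : 5 < n) (m : ℕ) : gNit n m 2 = 2 := by
  induction m with
  | zero => rfl
  | succ m ih => show gNit n m (gN n 2) = 2; have : gN n 2 = 2 := by unfold gN; simp
                 rw [this]; exact ih

lemma gNit_add (a b r : ℕ) : gNit n (a + b) r = gNit n b (gNit n a r) := by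
  induction a generalizing r with
  | zero => rw [Nat.zero_add]; rfl
  | succ a ih =>
    have h1 : a + 1 + b = (a + b) + 1 := by omega
    show gNit n (a+1+b) r = _
    rw [h1]
    show gNit n (a + b) (gN n r) = _
    rw [ih (gN n r)]
    rfl

lemma gNit_range (hn : 5 < n) (m : ℕ) {r : ℕ} (h1 : 1 ≤ r) (h2 : r ≤ n-1) :
    1 ≤ gNit n m r ∧ gNit n m r ≤ n-1 := by
  induction m generalizing r with
  | zero => exact ⟨h1, h2⟩
  | succ m ih =>
    obtain ⟨a, b⟩ := gN_range hn h1 h2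
    exact ih a b

lemma gNit_progress (hn : 5 < n) (t : ℕ) {r : ℕ} (h1 : 1 ≤ r) (h2 : r ≤ n-1) :
    gNit n t r = 2 ∨ (gNit n t r + 2*t) % n = r % n := by
  induction t generalizing r with
  | zero => right; rfl
  | succ t ih =>
    by_cases hr2 : r = 2
    · left; rw [hr2]; exact gNit_two hn _
    · have hst : gNit n (t+1) r = gNit n t (gN n r) := rfl
      obtain ⟨g1, g2⟩ := gN_range hn h1 h2
      rcases ih g1 g2 with h | h
      · left; rw [hst, h]
      · right
        rw [hst]
        set X := gNit n t (gN n r)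
        by_cases hr1 : r = 1
        · have hg : gN n r = n - 1 := by unfold gN; rw [hr1]; norm_num
          rw [hg] at h
          rw [Nat.mod_eq_of_lt (by omega : n - 1 < n)] at h
          have : X + 2*(t+1) = (X + 2*t) + 2 := by ring
          rw [this, ← Nat.mod_add_mod, h, hr1]
          rw [modtwo hn (by omega), Nat.mod_eq_of_lt (by omega)]
          split_ifs <;> omega
        · have hg : gN n r = r - 2 := by unfold gN; rw [if_neg hr2, if_neg hr1]
          rw [hg] at h
          rw [Nat.mod_eq_of_lt (by omega : r - 2 < n)] at h
          have : X + 2*(t+1) = (X + 2*t) + 2 := by ring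
          rw [this, ← Nat.mod_add_mod, h]
          congr 1
          omega

lemma exists_mul_mod (hn : 5 < n) {d : ℕ} (hd : Nat.gcd n d = 1) (r : ℕ) (hr : r < n) :
    ∃ t, t < n ∧ (t * d) % n = r := by
  have hpos : 0 < n := by omega
  let F : Fin n → Fin n := fun t => ⟨(t.val * d) % n, Nat.mod_lt _ hpos⟩
  have hinj : Function.Injective F := by
    intro t1 t2 h
    have h' : (t1.val * d) % n = (t2.val * d) % n := congrArg Fin.val h
    have := Nat.ModEq.cancel_right_of_coprime hd h'
    have := this
    unfold Nat.ModEq at this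
    apply Fin.ext
    rw [Nat.mod_eq_of_lt t1.isLt, Nat.mod_eq_of_lt t2.isLt] at this
    exact this
  obtain ⟨t, ht⟩ := Finite.surjective_of_injective hinj ⟨r, hr⟩
  exact ⟨t.val, t.isLt, congrArg Fin.val ht⟩

lemma coprime2 (hodd : Odd n) : Nat.gcd n 2 = 1 := Nat.coprime_two_right.mpr hodd

lemma gN_hits (hn : 5 < n) (hodd : Odd n) {r : ℕ} (h1 : 1 ≤ r) (h2 : r ≤ n-1) :
    gNit n n r = 2 := by
  obtain ⟨t, htn, ht⟩ := exists_mul_mod hn (coprime2 hodd) ((r + n - 2) % n)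
    (Nat.mod_lt _ (by omega))
  have hX2 : gNit n t r = 2 := by
    rcases gNit_progress hn t h1 h2 with h | h
    · exact h
    · set X := gNit n t r with hXdef
      obtain ⟨x1, x2⟩ := gNit_range hn t h1 h2
      rw [Nat.mod_eq_of_lt (by omega : r < n)] at h
      -- (t*2) % n = (r + n - 2) % n, and (X + 2t) % n = r
      -- so X + (r + n - 2) ≡ X + 2t ≡ r ≡ 2 + (r + n - 2) [MOD n]
      have addcong : ∀ a b c : ℕ, b % n = c % n → (a + b) % n = (a + c) % n := by
        intro a b c hbc
        rw [Nat.add_mod a b, hbc, ← Nat.add_mod]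
      have e1 : (X + 2*t) % n = (X + (r + n - 2)) % n := by
        rw [show 2*t = t*2 by ring]
        exact addcong X _ _ ht
      have e2 : (2 + (r + n - 2)) % n = r := by
        rw [show 2 + (r + n - 2) = r + n by omega, Nat.add_mod_right,
          Nat.mod_eq_of_lt (by omega)]
      have e3 : (X + (r + n - 2)) % n = (2 + (r + n - 2)) % n := by
        rw [e1.symm, h, e2]
      have e4 : X % n = 2 % n := by
        have : X + (r + n - 2) ≡ 2 + (r + n - 2) [MOD n] := e3
        exact Nat.ModEq.add_right_cancel' _ this
      rw [Nat.mod_eq_of_lt (by omega), Nat.mod_eq_of_lt (by omega)] at e4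
      exact e4
  have hsplit : gNit n n r = gNit n (n - t) (gNit n t r) := by
    rw [← gNit_add, Nat.add_sub_cancel' (by omega)]
  rw [hsplit, hX2, gNit_two hn]

def Wt (n : ℕ) : ℕ → List Bool
  | 0 => []
  | m+1 => stepv n 1 ++ Wt n m

lemma Wt_center (hn : 5 < n) (m : ℕ) :
    dw (Kdelta n) ⟨1, by omega⟩ (Wt n m) = ⟨1, by omega⟩ := by
  induction m with
  | zero => rfl
  | succ m ih =>
    show dw (Kdelta n) ⟨1, by omega⟩ (stepv n 1 ++ Wt n m) = _
    rw [dw_append]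
    have h1 : (⟨1, by omega⟩ : Fin n).val = 1 := rfl
    have := step_center hn (⟨1, by omega⟩ : Fin n)
    rw [h1] at this
    rw [this, ih]

lemma Wt_rel (hn : 5 < n) (m : ℕ) (q : Fin n)
    (h1 : 1 ≤ relv n q ⟨1, by omega⟩) (h2 : relv n q ⟨1, by omega⟩ ≤ n - 1) :
    relv n (dw (Kdelta n) q (Wt n m)) ⟨1, by omega⟩ = gNit n m (relv n q ⟨1, by omega⟩) := by
  induction m generalizing q with
  | zero => rfl
  | succ m ih =>
    have hne : q ≠ ⟨1, by omega⟩ := by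
      intro h; rw [h, relv_self hn] at h1; omega
    show relv n (dw (Kdelta n) q (stepv n 1 ++ Wt n m)) _ = _
    rw [dw_append]
    have hv : (1 : ℕ) = (⟨1, by omega⟩ : Fin n).val := rfl
    have hstep := step_rel hn ⟨1, by omega⟩ q hne
    rw [← hv] at hstep
    obtain ⟨g1, g2⟩ := gN_range hn h1 h2
    rw [ih _ (by rw [hstep]; exact g1) (by rw [hstep]; exact g2), hstep]
    rfl

def wpw (n : ℕ) (pv : ℕ) : List Bool := stepv n pv ++ Wt n n

lemma main_word (hn : 5 < n) (hodd : Odd n) (p q : Fin n) :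
    dw (Kdelta n) q (wpw n p.val) = if q = p then ⟨1, by omega⟩ else ⟨3, by omega⟩ := by
  unfold wpw
  rw [dw_append]
  by_cases h : q = p
  · rw [if_pos h, h, step_center hn, Wt_center hn]
  · rw [if_neg h]
    set q1 := dw (Kdelta n) q (stepv n p.val) with hq1
    have hrel : relv n q1 ⟨1, by omega⟩ = gN n (relv n q p) := step_rel hn p q h
    have hb1 : 1 ≤ relv n q p := relv_pos hn h
    have hb2 : relv n q p ≤ n - 1 := by have := relv_lt hn q p; omega
    obtain ⟨g1, g2⟩ := gN_range hn hb1 hb2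
    have h1 : 1 ≤ relv n q1 ⟨1, by omega⟩ := by rw [hrel]; exact g1
    have h2 : relv n q1 ⟨1, by omega⟩ ≤ n - 1 := by rw [hrel]; exact g2
    have hfin := Wt_rel hn n q1 h1 h2
    rw [hrel] at hfin
    have hhit : gNit n n (gN n (relv n q p)) = 2 := gN_hits hn hodd g1 g2
    rw [hhit] at hfin
    -- relv n x ⟨1⟩ = 2 → x = ⟨3⟩
    have := (relv_eq_iff hn (dw (Kdelta n) q1 (Wt n n)) ⟨1, by omega⟩ 2 (by omega)).mp hfin
    apply Fin.ext
    rw [this]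
    show (1 + 2) % n = 3
    exact Nat.mod_eq_of_lt (by omega)

def wsync (n : ℕ) : List Bool := wpw n 0 ++ (List.replicate (n-1) true ++ [false])

lemma sync_all (hn : 5 < n) (hodd : Odd n) (q : Fin n) :
    dw (Kdelta n) q (wsync n) = ⟨3, by omega⟩ := by
  unfold wsync
  rw [dw_append]
  have h0 : (0 : ℕ) = ((⟨0, by omega⟩ : Fin n)).val := rfl
  have hm := main_word hn hodd ⟨0, by omega⟩ q
  rw [← h0] at hm
  rw [hm]
  have key : ∀ y : Fin n, y.val = 1 ∨ y.val = 3 →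
      dw (Kdelta n) y (List.replicate (n-1) true ++ [false]) = ⟨3, by omega⟩ := by
    intro y hy
    rw [dw_append]
    have hrep : dw (Kdelta n) y (List.replicate (n-1) true) =
        ⟨(y.val + (n-1)) % n, Nat.mod_lt _ (by omega)⟩ := Fin.ext (dw_rep_true hn y _)
    rw [hrep]
    apply Fin.ext
    show (Kdelta n _ false).val = 3
    rw [kd_false_val hn]
    simp only [Fin.val_mk]
    rcases hy with hy | hy <;> rw [hy]
    · rw [show (1 + (n-1)) % n = 0 by rw [modtwo hn (by omega)]; split_ifs <;> omega]
      norm_num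
    · rw [show (3 + (n-1)) % n = 2 by rw [modtwo hn (by omega)]; split_ifs <;> omega]
      split_ifs <;> omega
  split_ifs with hq
  · exact key _ (Or.inl rfl)
  · exact key _ (Or.inr rfl)

open Finset in
lemma A_surj (hn : 5 < n) (y : Fin n) (hy : y.val ≠ n - 1) :
    ∃ x : Fin n, Kdelta n x false = y := by
  have hylt := y.isLt
  by_cases h0 : y.val = 0
  · refine ⟨⟨n-1, by omega⟩, Fin.ext ?_⟩
    rw [kd_false_val hn]
    simp only [Fin.val_mk]
    rw [if_neg (by omega)]
    simp [h0]
  · by_cases h1 : y.val = 1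
    · refine ⟨⟨n-2, by omega⟩, Fin.ext ?_⟩
      rw [kd_false_val hn]
      simp only [Fin.val_mk]
      rw [if_neg (by omega), if_neg (by omega)]
      simp [h1]
    · refine ⟨⟨y.val - 1, by omega⟩, Fin.ext ?_⟩
      rw [kd_false_val hn]
      simp only [Fin.val_mk]
      rw [if_neg (by omega), if_neg (by omega), if_neg (by omega)]
      omega

lemma coprime_n4 (hn : 5 < n) (hodd : Odd n) : Nat.gcd n (n - 4) = 1 := by
  have hc4 : Nat.Coprime n 4 := by
    have h2 : Nat.Coprime n 2 := Nat.coprime_two_right.mpr hodd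
    have := Nat.Coprime.mul_right h2 h2
    norm_num at this
    exact this
  have hd4 : Nat.gcd n (n - 4) ∣ 4 := by
    have h1 : Nat.gcd n (n - 4) ∣ n := Nat.gcd_dvd_left _ _
    have h2 : Nat.gcd n (n - 4) ∣ n - 4 := Nat.gcd_dvd_right _ _
    have := Nat.dvd_sub h1 h2
    rwa [show n - (n - 4) = 4 by omega] at this
  have hdn : Nat.gcd n (n - 4) ∣ n := Nat.gcd_dvd_left _ _
  have : Nat.gcd n (n - 4) ∣ Nat.gcd n 4 := Nat.dvd_gcd hdn hd4
  rw [hc4] at this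
  exact Nat.dvd_one.mp this

open Finset in
lemma KclosureUniv (hn : 5 < n) (hodd : Odd n) (S : Finset (Fin n)) (hne : S.Nonempty)
    (hcl : ∀ s ∈ S, s + ⟨n-4, by omega⟩ ∈ S) : S = univ := by
  obtain ⟨s0, hs0⟩ := hne
  have key : ∀ μ : ℕ, (⟨(s0.val + μ * (n-4)) % n, Nat.mod_lt _ (by omega)⟩ : Fin n) ∈ S := by
    intro μ
    induction μ with
    | zero => simpa [Nat.mod_eq_of_lt s0.isLt] using hs0
    | succ μ ih =>
      have := hcl _ ih
      have hval : ((⟨(s0.val + μ * (n-4)) % n, Nat.mod_lt _ (by omega)⟩ : Fin n)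
          + ⟨n-4, by omega⟩).val = (s0.val + (μ+1) * (n-4)) % n := by
        rw [Fin.val_add]
        simp only [Fin.val_mk]
        rw [Nat.mod_add_mod]
        congr 1
        ring
      have heq : (⟨(s0.val + μ * (n-4)) % n, Nat.mod_lt _ (by omega)⟩ : Fin n)
          + ⟨n-4, by omega⟩ = ⟨(s0.val + (μ+1) * (n-4)) % n, Nat.mod_lt _ (by omega)⟩ :=
        Fin.ext hval
      rwa [heq] at this
  rw [eq_univ_iff_forall]
  intro q
  obtain ⟨t, htn, ht⟩ := exists_mul_mod hn (coprime_n4 hn hodd) (relv n q s0) (relv_lt hn q s0)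
  have := key t
  have heq : (s0.val + t * (n-4)) % n = q.val := by
    rw [Nat.add_mod, ht]
    unfold relv
    rw [← Nat.add_mod]
    rw [show s0.val + (q.val + n - s0.val) = q.val + n from by omega,
      Nat.add_mod_right, Nat.mod_eq_of_lt q.isLt]
  have : (⟨(s0.val + t * (n-4)) % n, Nat.mod_lt _ (by omega)⟩ : Fin n) = q := Fin.ext heq
  have hmem := key t
  rwa [this] at hmem

def FAfun (n : ℕ) [NeZero n] (kv : ℕ) : Fin n → Fin n :=
  fun q => ⟨((Kdelta n q false).val + kv) % n, Nat.mod_lt _ (NeZero.pos n)⟩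

lemma FAfun_val (kv : ℕ) (q : Fin n) :
    (FAfun n kv q).val = ((Kdelta n q false).val + kv) % n := rfl

lemma FA_zero (hn : 5 < n) (x : Fin n) (kv : ℕ) (hkv : kv = (x.val + n - 3) % n) :
    FAfun n kv ⟨0, by omega⟩ = x ∧ FAfun n kv ⟨2, by omega⟩ = x := by
  have hA0 : (Kdelta n (⟨0, by omega⟩ : Fin n) false).val = 3 := by
    rw [kd_false_val hn]; simp
  have hA2 : (Kdelta n (⟨2, by omega⟩ : Fin n) false).val = 3 := by
    rw [kd_false_val hn]
    simp only [Fin.val_mk]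
    rw [if_neg (by omega), if_neg (by omega), if_neg (by omega)]
  have hcomp : (3 + kv) % n = x.val := by
    rw [hkv, Nat.add_comm 3, Nat.mod_add_mod,
      show x.val + n - 3 + 3 = x.val + n from by omega, Nat.add_mod_right,
      Nat.mod_eq_of_lt x.isLt]
  constructor
  · apply Fin.ext; rw [FAfun_val, hA0, hcomp]
  · apply Fin.ext; rw [FAfun_val, hA2, hcomp]

open Finset in
lemma reach_img (hn : 5 < n) (S : Finset (Fin n)) (x : Fin n) (kv : ℕ)
    (hxS : x ∈ S) (hxout : x + ⟨n-4, by omega⟩ ∉ S) (hkv : kv = (x.val + n - 3) % n) :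
    (univ.filter (fun q => FAfun n kv q ∈ S)).image (FAfun n kv) = S := by
  have hkvlt : kv < n := hkv ▸ Nat.mod_lt _ (by omega)
  apply Finset.ext
  intro s
  rw [mem_image]
  constructor
  · rintro ⟨q, hqT, rfl⟩
    exact (mem_filter.mp hqT).2
  · intro hsS
    obtain ⟨yv, hyv⟩ : ∃ yv : ℕ, yv = (s.val + n - kv) % n := ⟨_, rfl⟩
    have hyvlt : yv < n := hyv ▸ Nat.mod_lt _ (by omega)
    have hcompy : (yv + kv) % n = s.val := by
      rw [hyv, Nat.mod_add_mod, show s.val + n - kv + kv = s.val + n from by omega,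
        Nat.add_mod_right, Nat.mod_eq_of_lt s.isLt]
    have hyne : yv ≠ n - 1 := by
      intro hcon
      apply hxout
      have hsval : s.val = (n - 1 + kv) % n := by rw [← hcompy, hcon]
      have hxval : (x + ⟨n-4, by omega⟩ : Fin n).val = (x.val + (n-4)) % n := by
        rw [Fin.val_add]
      have heq : s = x + ⟨n-4, by omega⟩ := by
        apply Fin.ext
        rw [hsval, hxval, hkv, Nat.add_comm (n-1), Nat.mod_add_mod,
          show x.val + n - 3 + (n - 1) = (x.val + (n-4)) + n from by omega,
          Nat.add_mod_right]
      rwa [← heq]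
    obtain ⟨q, hq⟩ := A_surj hn ⟨yv, hyvlt⟩ (by simpa using hyne)
    have hFAq : FAfun n kv q = s := by
      apply Fin.ext
      rw [FAfun_val, hq]
      simpa using hcompy
    exact ⟨q, mem_filter.mpr ⟨mem_univ _, by rw [hFAq]; exact hsS⟩, hFAq⟩

open Finset in
lemma reach_step (hn : 5 < n) (hodd : Odd n) (S : Finset (Fin n)) (hne : S.Nonempty)
    (hpr : S ≠ univ) :
    ∃ T : Finset (Fin n), S.card < T.card ∧
      ∃ u : List Bool, T.image (fun q => dw (Kdelta n) q u) = S := by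
  have hex : ∃ x ∈ S, x + ⟨n-4, by omega⟩ ∉ S := by
    by_contra hcon
    push_neg at hcon
    exact hpr (KclosureUniv hn hodd S hne hcon)
  obtain ⟨x, hxS, hxout⟩ := hex
  obtain ⟨kv, hkv⟩ : ∃ kv : ℕ, kv = (x.val + n - 3) % n := ⟨_, rfl⟩
  have himg := reach_img hn S x kv hxS hxout hkv
  obtain ⟨hFA0, hFA2⟩ := FA_zero hn x kv hkv
  have h0T : (⟨0, by omega⟩ : Fin n) ∈ univ.filter (fun q => FAfun n kv q ∈ S) :=
    mem_filter.mpr ⟨mem_univ _, by rw [hFA0]; exact hxS⟩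
  have h2T : (⟨2, by omega⟩ : Fin n) ∈ univ.filter (fun q => FAfun n kv q ∈ S) :=
    mem_filter.mpr ⟨mem_univ _, by rw [hFA2]; exact hxS⟩
  have hsurj : ∀ s ∈ S, ∃ q ∈ univ.filter (fun q => FAfun n kv q ∈ S), FAfun n kv q = s := by
    intro s hs
    rw [← himg] at hs
    exact mem_image.mp hs
  have hcardle : S.card ≤ (univ.filter (fun q => FAfun n kv q ∈ S)).card := by
    apply card_le_card_of_surjOn (FAfun n kv)
    intro s hs
    obtain ⟨q, hqT, hq⟩ := hsurj s hs
    exact ⟨q, hqT, hq⟩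
  have hcardne : S.card ≠ (univ.filter (fun q => FAfun n kv q ∈ S)).card := by
    intro heq
    have hinj := Finset.inj_on_of_surj_on_of_card_le (fun a _ => FAfun n kv a)
      (fun a ha => (mem_filter.mp ha).2) (fun b hb => by
        obtain ⟨q, hqT, hq⟩ := hsurj b hb; exact ⟨q, hqT, hq⟩) (le_of_eq heq.symm)
    have h02 := hinj h0T h2T (by rw [hFA0, hFA2])
    have hv := congrArg Fin.val h02
    simp at hv
  refine ⟨univ.filter (fun q => FAfun n kv q ∈ S), by omega,
    false :: List.replicate kv true, ?_⟩
  have hdwu : (fun q => dw (Kdelta n) q (false :: List.replicate kv true)) = FAfun n kv := by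
    funext q
    rw [dw_cons]
    exact Fin.ext (dw_rep_true hn _ _)
  rw [hdwu]
  exact himg

open Finset in
lemma reach_all (hn : 5 < n) (hodd : Odd n) :
    ∀ k (S : Finset (Fin n)), S.Nonempty → n - S.card ≤ k →
      ∃ w : List Bool, univ.image (fun q => dw (Kdelta n) q w) = S := by
  intro k
  induction k with
  | zero =>
    intro S hne hc
    have hcard : S.card ≤ n := le_trans (card_le_univ S) (by simp)
    have : S = univ := eq_univ_of_card S (by simp; omega)
    refine ⟨[], ?_⟩
    rw [this]
    simp [dw_nil]
  | succ k ih =>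
    intro S hne hc
    by_cases huniv : S = univ
    · refine ⟨[], ?_⟩
      rw [huniv]
      simp [dw_nil]
    · obtain ⟨T, hcard, u, hTu⟩ := reach_step hn hodd S hne huniv
      have hTne : T.Nonempty := by
        rw [← card_pos]
        have := card_pos.mpr hne
        omega
      have hTcard : T.card ≤ n := le_trans (card_le_univ T) (by simp)
      obtain ⟨v, hv⟩ := ih T hTne (by omega)
      refine ⟨v ++ u, ?_⟩
      have : (fun q => dw (Kdelta n) q (v ++ u)) =
          (fun q => dw (Kdelta n) q u) ∘ (fun q => dw (Kdelta n) q v) := by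
        funext q
        simp [dw_append]
      rw [this, ← Finset.image_image, hv, hTu]

end KnAux

theorem Kn_sc_max (n : ℕ) [NeZero n] (hodd : Odd n) (hn : 5 < n) :
    sc (Syn (Kdelta n)) = 2 ^ n - n := by
  classical
  -- the power-set image map
  let Φ : List Bool → Finset (Fin n) := fun u => Finset.univ.image (fun q => dw (Kdelta n) q u)
  have hΦapp : ∀ u x, Φ (u ++ x) = (Φ u).image (fun q => dw (Kdelta n) q x) := by
    intro u x
    show Finset.univ.image (fun q => dw (Kdelta n) q (u ++ x)) = _
    have he : (fun q => dw (Kdelta n) q (u ++ x)) =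
        (fun q => dw (Kdelta n) q x) ∘ (fun q => dw (Kdelta n) q u) := by
      funext q; simp [dw_append]
    rw [he, ← Finset.image_image]
  have hΦne : ∀ u, (Φ u).Nonempty :=
    fun u => Finset.Nonempty.image ⟨⟨0, by omega⟩, Finset.mem_univ _⟩ _
  have hSyn : ∀ u, u ∈ Syn (Kdelta n) ↔ (Φ u).card = 1 := fun u => Iff.rfl
  have himg1 : ∀ (S : Finset (Fin n)) (x : List Bool), S.card = 1 →
      (S.image (fun q => dw (Kdelta n) q x)).card = 1 := by
    intro S x h
    obtain ⟨a, rfl⟩ := Finset.card_eq_one.mp h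
    simp
  -- image of a set not containing p under wpw is a singleton
  have hwp_img : ∀ (T : Finset (Fin n)) (p : Fin n), T.Nonempty → p ∉ T →
      (T.image (fun q => dw (Kdelta n) q (wpw n p.val))).card = 1 := by
    intro T p hne hp
    rw [Finset.card_eq_one]
    refine ⟨⟨3, by omega⟩, ?_⟩
    apply Finset.ext
    intro y
    rw [Finset.mem_image, Finset.mem_singleton]
    constructor
    · rintro ⟨q, hq, rfl⟩
      have hqp : q ≠ p := fun h => hp (h ▸ hq)
      rw [main_word hn hodd p q, if_neg hqp]
    · rintro rfl
      obtain ⟨t, ht⟩ := hne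
      have htp : t ≠ p := fun h => hp (h ▸ ht)
      exact ⟨t, ht, by rw [main_word hn hodd p t, if_neg htp]⟩
  -- image of a set containing p and another element under wpw is not a singleton
  have hwp_2 : ∀ (S : Finset (Fin n)) (p : Fin n), p ∈ S → 2 ≤ S.card →
      (S.image (fun q => dw (Kdelta n) q (wpw n p.val))).card ≠ 1 := by
    intro S p hp hS
    obtain ⟨a, ha, b, hb, hab⟩ := Finset.one_lt_card.mp (show 1 < S.card by omega)
    obtain ⟨q, hq, hqp⟩ : ∃ q ∈ S, q ≠ p := by
      by_cases hap : a = p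
      · exact ⟨b, hb, by rw [← hap]; exact fun h => hab h.symm⟩
      · exact ⟨a, ha, hap⟩
    have h1 : (⟨1, by omega⟩ : Fin n) ∈ S.image (fun q => dw (Kdelta n) q (wpw n p.val)) := by
      rw [Finset.mem_image]
      exact ⟨p, hp, by rw [main_word hn hodd p p, if_pos rfl]⟩
    have h3 : (⟨3, by omega⟩ : Fin n) ∈ S.image (fun q => dw (Kdelta n) q (wpw n p.val)) := by
      rw [Finset.mem_image]
      exact ⟨q, hq, by rw [main_word hn hodd p q, if_neg hqp]⟩
    have : 1 < (S.image (fun q => dw (Kdelta n) q (wpw n p.val))).card :=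
      Finset.one_lt_card.mpr ⟨_, h1, _, h3, by
        intro h
        have := congrArg Fin.val h
        simp at this⟩
    omega
  -- the collapsing map
  let ψ : List Bool → Finset (Fin n) :=
    fun u => if (Φ u).card = 1 then {(⟨0, NeZero.pos n⟩ : Fin n)} else Φ u
  have hψdef : ∀ u, ψ u =
      if (Φ u).card = 1 then ({(⟨0, NeZero.pos n⟩ : Fin n)} : Finset (Fin n)) else Φ u :=
    fun _ => rfl
  -- forward: Nerode equivalent words have equal ψ
  have hsub : ∀ u v, (∀ x, u ++ x ∈ Syn (Kdelta n) ↔ v ++ x ∈ Syn (Kdelta n)) →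
      ¬ (Φ u).card = 1 → ¬ (Φ v).card = 1 → Φ u ⊆ Φ v := by
    intro u v h hcu hcv
    intro p hp
    by_contra hpv
    have hx := (h (wpw n p.val))
    rw [hSyn, hSyn, hΦapp, hΦapp] at hx
    have hv1 : ((Φ v).image (fun q => dw (Kdelta n) q (wpw n p.val))).card = 1 :=
      hwp_img (Φ v) p (hΦne v) hpv
    have hu1 : ((Φ u).image (fun q => dw (Kdelta n) q (wpw n p.val))).card ≠ 1 := by
      apply hwp_2 (Φ u) p hp
      have := Finset.card_pos.mpr (hΦne u)
      omega
    exact hu1 (hx.mpr hv1)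
  have hfwd : ∀ u v, (∀ x, u ++ x ∈ Syn (Kdelta n) ↔ v ++ x ∈ Syn (Kdelta n)) → ψ u = ψ v := by
    intro u v h
    have h0 := h []
    rw [List.append_nil, List.append_nil, hSyn, hSyn] at h0
    by_cases hc : (Φ u).card = 1
    · have hc2 : (Φ v).card = 1 := h0.mp hc
      rw [hψdef u, hψdef v, if_pos hc, if_pos hc2]
    · have hc2 : ¬ (Φ v).card = 1 := fun hh => hc (h0.mpr hh)
      have heq : Φ u = Φ v :=
        Finset.Subset.antisymm (hsub u v h hc hc2)
          (hsub v u (fun x => (h x).symm) hc2 hc)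
      rw [hψdef u, hψdef v, if_neg hc, if_neg hc2, heq]
  -- backward: equal ψ implies Nerode equivalent
  have hbwd : ∀ u v, ψ u = ψ v → (∀ x, u ++ x ∈ Syn (Kdelta n) ↔ v ++ x ∈ Syn (Kdelta n)) := by
    intro u v hψ x
    by_cases hc : (Φ u).card = 1
    · have hc2 : (Φ v).card = 1 := by
        by_contra hh
        have h1 : ψ u = ({(⟨0, NeZero.pos n⟩ : Fin n)} : Finset (Fin n)) := by
          rw [hψdef u, if_pos hc]
        have h2 : ψ v = Φ v := by rw [hψdef v, if_neg hh]
        have hcard : ({(⟨0, NeZero.pos n⟩ : Fin n)} : Finset (Fin n)).card = (Φ v).card := by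
          rw [← h1, hψ, h2]
        rw [Finset.card_singleton] at hcard
        exact hh hcard.symm
      rw [hSyn, hSyn, hΦapp, hΦapp]
      constructor
      · intro _; exact himg1 _ _ hc2
      · intro _; exact himg1 _ _ hc
    · have hc2 : ¬ (Φ v).card = 1 := by
        intro hh
        apply hc
        have h1 : ψ u = Φ u := by rw [hψdef u, if_neg hc]
        have h2 : ψ v = ({(⟨0, NeZero.pos n⟩ : Fin n)} : Finset (Fin n)) := by
          rw [hψdef v, if_pos hh]
        have hcard : (Φ u).card = ({(⟨0, NeZero.pos n⟩ : Fin n)} : Finset (Fin n)).card := by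
          rw [← h1, hψ, h2]
        rwa [Finset.card_singleton] at hcard
      have heq : Φ u = Φ v := by
        have h1 : ψ u = Φ u := by show (if _ then _ else _) = _; rw [if_neg hc]
        have h2 : ψ v = Φ v := by show (if _ then _ else _) = _; rw [if_neg hc2]
        rw [← h1, ← h2, hψ]
      rw [hSyn, hSyn, hΦapp, hΦapp, heq]
  -- the target finset of classes
  let R : Finset (Finset (Fin n)) :=
    Finset.univ.filter (fun S => 2 ≤ S.card ∨ S = {(⟨0, NeZero.pos n⟩ : Fin n)})
  have hψR : ∀ u, ψ u ∈ R := by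
    intro u
    rw [Finset.mem_filter]
    refine ⟨Finset.mem_univ _, ?_⟩
    by_cases hc : (Φ u).card = 1
    · right; rw [hψdef u, if_pos hc]
    · left
      have := Finset.card_pos.mpr (hΦne u)
      have h2 : 2 ≤ (Φ u).card := by omega
      rw [hψdef u, if_neg hc]
      exact h2
  -- bijection between Nerode classes and R
  let Ψ : Quotient (nerode (Syn (Kdelta n))) → {S : Finset (Fin n) // S ∈ R} :=
    Quotient.lift (fun u => (⟨ψ u, hψR u⟩ : {S : Finset (Fin n) // S ∈ R}))
      (fun u v huv => Subtype.ext (hfwd u v huv))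
  have hbij : Function.Bijective Ψ := by
    constructor
    · intro a b
      induction a using Quotient.inductionOn with
      | h u =>
        induction b using Quotient.inductionOn with
        | h v =>
          intro h
          have : ψ u = ψ v := congrArg Subtype.val h
          exact Quotient.sound (hbwd u v this)
    · rintro ⟨S, hS⟩
      rw [Finset.mem_filter] at hS
      rcases hS.2 with h2 | h2
      · obtain ⟨w, hw⟩ := reach_all hn hodd n S
          (Finset.card_pos.mp (by omega)) (by omega)
        refine ⟨Quotient.mk _ w, Subtype.ext ?_⟩
        show ψ w = S
        have hΦw : Φ w = S := hw
        rw [hψdef w, if_neg (by rw [hΦw]; omega), hΦw]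
      · refine ⟨Quotient.mk _ (wsync n), Subtype.ext ?_⟩
        show ψ (wsync n) = S
        have hconst : (fun q => dw (Kdelta n) q (wsync n)) =
            (fun _ => (⟨3, by omega⟩ : Fin n)) := funext (sync_all hn hodd)
        have hΦw : Φ (wsync n) = {(⟨3, by omega⟩ : Fin n)} := by
          show Finset.univ.image _ = _
          rw [hconst]
          exact Finset.image_const ⟨⟨0, by omega⟩, Finset.mem_univ _⟩ _
        rw [hψdef (wsync n), if_pos (by rw [hΦw]; exact Finset.card_singleton _), h2]
  -- counting
  have hcount : Nat.card (Quotient (nerode (Syn (Kdelta n)))) = R.card := by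
    rw [Nat.card_eq_of_bijective Ψ hbij, Nat.card_eq_fintype_card, Fintype.card_coe]
  -- card of complement of R is n
  have hcompl : (Finset.univ.filter
      (fun S : Finset (Fin n) => ¬ (2 ≤ S.card ∨ S = {(⟨0, NeZero.pos n⟩ : Fin n)}))).card = n := by
    have himg : Finset.univ.filter
        (fun S : Finset (Fin n) => ¬ (2 ≤ S.card ∨ S = {(⟨0, NeZero.pos n⟩ : Fin n)})) =
        Finset.univ.image (fun i : Fin n =>
          if i = ⟨0, by omega⟩ then (∅ : Finset (Fin n)) else {i}) := by
      apply Finset.ext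
      intro S
      rw [Finset.mem_filter, Finset.mem_image]
      constructor
      · rintro ⟨-, hS⟩
        push_neg at hS
        obtain ⟨hc, hne⟩ := hS
        interval_cases hcc : S.card
        · refine ⟨⟨0, by omega⟩, Finset.mem_univ _, ?_⟩
          rw [if_pos rfl]
          exact (Finset.card_eq_zero.mp hcc).symm
        · obtain ⟨a, rfl⟩ := Finset.card_eq_one.mp hcc
          have hane : a ≠ ⟨0, by omega⟩ := by
            intro h; exact hne (by rw [h])
          exact ⟨a, Finset.mem_univ _, by rw [if_neg hane]⟩
      · rintro ⟨i, -, rfl⟩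
        refine ⟨Finset.mem_univ _, ?_⟩
        push_neg
        by_cases hi : i = ⟨0, by omega⟩
        · rw [if_pos hi]
          constructor
          · simp
          · intro h
            exact Finset.singleton_ne_empty _ h.symm
        · rw [if_neg hi]
          constructor
          · simp
          · intro h
            exact hi (Finset.singleton_inj.mp h)
    rw [himg]
    rw [Finset.card_image_of_injective _ ?_, Finset.card_univ, Fintype.card_fin]
    intro i j hij
    dsimp only at hij
    by_cases hi : i = ⟨0, by omega⟩ <;> by_cases hj : j = ⟨0, by omega⟩
    · rw [hi, hj]
    · rw [if_pos hi, if_neg hj] at hij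
      exact absurd hij.symm (Finset.singleton_ne_empty _)
    · rw [if_neg hi, if_pos hj] at hij
      exact absurd hij (Finset.singleton_ne_empty _)
    · rw [if_neg hi, if_neg hj] at hij
      exact Finset.singleton_inj.mp hij
  show Nat.card (Quotient (nerode (Syn (Kdelta n)))) = 2 ^ n - n
  rw [hcount]
  show (Finset.univ.filter
      (fun S : Finset (Fin n) => 2 ≤ S.card ∨ S = {(⟨0, NeZero.pos n⟩ : Fin n)})).card = 2 ^ n - n
  have key := Finset.card_filter_add_card_filter_not
    (s := (Finset.univ : Finset (Finset (Fin n))))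
    (p := fun S => 2 ≤ S.card ∨ S = {(⟨0, NeZero.pos n⟩ : Fin n)})
  rw [Finset.card_univ, Fintype.card_finset, Fintype.card_fin] at key
  have hpow : n < 2 ^ n := Nat.lt_two_pow_self
  omega
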